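/- arXiv:2009.04213 — 8 statements merged into one kernel-verified Lean document; each statement's English description precedes it below -/
import Mathlib

section
/- Let N be a positive integer, r ∈ {0,...,N}, and let S_r = {w ∈ ℝ^N : ‖w‖₀ ≤ r} be the set of r-sparse vectors. For any vector v ∈ ℝ^N, let T_r(v) ⊆ {1,...,N} be an index set of r largest-in-absolute-value entries of v. Then for all v' ∈ ℝ^N: ‖v'−v‖₁ − 2‖(v'−v)_{T_r(v)}‖₁ ≤ ‖v'‖₁ − ‖v‖₁ + 2·inf_{w ∈ S_r} ‖w−v‖₁, where subscripting by an index set denotes the subvector of the corresponding entries. -/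
open Finset

lemma aux_max_sum (N : ℕ) (v : Fin N → ℝ) (T S : Finset (Fin N)) (hc : S.card ≤ T.card)
    (hTmax : ∀ i ∈ T, ∀ j ∉ T, |v j| ≤ |v i|) :
    ∑ t ∈ S, |v t| ≤ ∑ t ∈ T, |v t| := by
  have h1 : ∑ t ∈ S, |v t| = ∑ t ∈ S ∩ T, |v t| + ∑ t ∈ S \ T, |v t| :=
    (Finset.sum_inter_add_sum_sdiff S T _).symm
  have h2 : ∑ t ∈ T, |v t| = ∑ t ∈ T ∩ S, |v t| + ∑ t ∈ T \ S, |v t| :=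
    (Finset.sum_inter_add_sum_sdiff T S _).symm
  rw [h1, h2, Finset.inter_comm S T]
  have hcard : (S \ T).card ≤ (T \ S).card := by
    have := Finset.card_inter_add_card_sdiff S T
    have := Finset.card_inter_add_card_sdiff T S
    have : (S ∩ T).card = (T ∩ S).card := by rw [Finset.inter_comm]
    omega
  refine add_le_add_right ?_ _
  rcases Finset.eq_empty_or_nonempty T with rfl | hT
  · have : S \ ∅ = ∅ := by
      have : S = ∅ := Finset.card_eq_zero.mp (Nat.le_zero.mp hc)
      simp [this]
    simp [this]
  · set m := T.inf' hT (fun t => |v t|) with hm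
    have hm0 : 0 ≤ m := by
      obtain ⟨i, hi, hieq⟩ := T.exists_mem_eq_inf' hT (fun t => |v t|)
      rw [hm, hieq]; positivity
    calc ∑ t ∈ S \ T, |v t| ≤ ∑ _t ∈ S \ T, m := by
          refine Finset.sum_le_sum fun j hj => ?_
          obtain ⟨i, hi, hieq⟩ := T.exists_mem_eq_inf' hT (fun t => |v t|)
          rw [hm, hieq]
          exact hTmax i hi j (Finset.mem_sdiff.mp hj).2
      _ = (S \ T).card • m := by rw [Finset.sum_const]
      _ ≤ (T \ S).card • m := by
          exact nsmul_le_nsmul_left hm0 hcard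
      _ = ∑ _t ∈ T \ S, m := by rw [Finset.sum_const]
      _ ≤ ∑ t ∈ T \ S, |v t| := by
          refine Finset.sum_le_sum fun i hi => ?_
          exact Finset.inf'_le _ (Finset.mem_sdiff.mp hi).1

/-- Lemma 1 (Lemma `First-Lem`): for any `v' ∈ ℝ^N`,
`‖v'−v‖₁ − 2‖(v'−v)_{T_r(v)}‖₁ ≤ ‖v'‖₁ − ‖v‖₁ + 2 inf_{w ∈ S_r} ‖w−v‖₁`. -/
theorem stmt_0 (N r : ℕ) (hr : r ≤ N) (v : Fin N → ℝ)
    (T : Finset (Fin N)) (hTcard : T.card = r)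
    (hTmax : ∀ i ∈ T, ∀ j ∉ T, |v j| ≤ |v i|)
    (v' : Fin N → ℝ) :
    (∑ t, |v' t - v t|) - 2 * (∑ t ∈ T, |v' t - v t|) ≤
      (∑ t, |v' t|) - (∑ t, |v t|) +
        2 * sInf {c : ℝ | ∃ w : Fin N → ℝ,
          (Finset.univ.filter (fun t => w t ≠ 0)).card ≤ r ∧ c = ∑ t, |w t - v t|} := by
  set σ : ℝ := ∑ t ∈ Tᶜ, |v t| with hσ
  -- lower bound on the sInf
  have hne : {c : ℝ | ∃ w : Fin N → ℝ,
      (Finset.univ.filter (fun t => w t ≠ 0)).card ≤ r ∧ c = ∑ t, |w t - v t|}.Nonempty := by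
    exact ⟨∑ t, |v t|, fun _ => 0, by simp, by simp⟩
  have hlb : ∀ c ∈ {c : ℝ | ∃ w : Fin N → ℝ,
      (Finset.univ.filter (fun t => w t ≠ 0)).card ≤ r ∧ c = ∑ t, |w t - v t|}, σ ≤ c := by
    rintro c ⟨w, hwcard, rfl⟩
    set S : Finset (Fin N) := Finset.univ.filter (fun t => w t ≠ 0) with hS
    have hsplit : ∑ t, |w t - v t| = ∑ t ∈ S, |w t - v t| + ∑ t ∈ Sᶜ, |w t - v t| :=
      (Finset.sum_add_sum_compl S _).symm
    have h2 : ∑ t ∈ Sᶜ, |w t - v t| = ∑ t ∈ Sᶜ, |v t| := by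
      refine Finset.sum_congr rfl fun t ht => ?_
      have : w t = 0 := by
        by_contra hne'
        exact (Finset.mem_compl.mp ht) (by simp [hS, hne'])
      rw [this, zero_sub, abs_neg]
    have h3 : ∑ t ∈ Sᶜ, |v t| ≥ σ := by
      have hall : ∑ t, |v t| = ∑ t ∈ S, |v t| + ∑ t ∈ Sᶜ, |v t| :=
        (Finset.sum_add_sum_compl S _).symm
      have hall' : ∑ t, |v t| = ∑ t ∈ T, |v t| + σ :=
        (Finset.sum_add_sum_compl T _).symm
      linarith [aux_max_sum N v T S (hTcard ▸ hwcard) hTmax]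
    have h4 : (0:ℝ) ≤ ∑ t ∈ S, |w t - v t| := Finset.sum_nonneg fun t _ => abs_nonneg _
    linarith
  have hsInf : σ ≤ sInf {c : ℝ | ∃ w : Fin N → ℝ,
      (Finset.univ.filter (fun t => w t ≠ 0)).card ≤ r ∧ c = ∑ t, |w t - v t|} :=
    le_csInf hne hlb
  -- pointwise bounds
  have hA : ∑ t, |v' t - v t| = ∑ t ∈ T, |v' t - v t| + ∑ t ∈ Tᶜ, |v' t - v t| :=
    (Finset.sum_add_sum_compl T _).symm
  have hB : ∑ t ∈ Tᶜ, |v' t - v t| ≤ ∑ t ∈ Tᶜ, |v' t| + σ := by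
    rw [hσ, ← Finset.sum_add_distrib]
    exact Finset.sum_le_sum fun t _ => abs_sub (v' t) (v t)
  have hC : ∑ t ∈ T, |v t| - ∑ t ∈ T, |v' t| ≤ ∑ t ∈ T, |v' t - v t| := by
    rw [← Finset.sum_sub_distrib]
    refine Finset.sum_le_sum fun t _ => ?_
    have := abs_sub_abs_le_abs_sub (v t) (v' t)
    rw [abs_sub_comm] at this
    linarith
  have hV' : ∑ t, |v' t| = ∑ t ∈ T, |v' t| + ∑ t ∈ Tᶜ, |v' t| :=
    (Finset.sum_add_sum_compl T _).symm
  have hV : ∑ t, |v t| = ∑ t ∈ T, |v t| + σ :=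
    (Finset.sum_add_sum_compl T _).symm
  linarith
end

section
/- Let φ : ℝ^{n×s} → ℝ^N, let J(A) = ‖φ(A)‖₁, let δ_r(A) = inf{‖φ(A) − w‖₁ : w ∈ ℝ^N, ‖w‖₀ ≤ r}, and let ξ_r be the r-th concentration ratio of φ. If ξ_r < 1/2, then for all A, A' ∈ ℝ^{n×s}: ‖φ(A') − φ(A)‖₁ ≤ (1/(1 − 2ξ_r))·(J(A') − J(A) + 2δ_r(A)). -/
open Finset

/-- The `r`-th concentration ratio of a map `φ : ℝ^{n×s} → ℝ^N`. -/
noncomputable def xi {n s N : ℕ} (φ : Matrix (Fin n) (Fin s) ℝ → (Fin N → ℝ)) (r : ℕ) : ℝ :=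
  sSup {c : ℝ | ∃ A A' : Matrix (Fin n) (Fin s) ℝ, ∃ T : Finset (Fin N),
    φ A ≠ φ A' ∧ T.card ≤ r ∧
    c = (∑ t ∈ T, |φ A t - φ A' t|) / (∑ t, |φ A t - φ A' t|)}

/-- The cost `J(A) = ‖φ(A)‖₁`. -/
noncomputable def Jcost {n s N : ℕ} (φ : Matrix (Fin n) (Fin s) ℝ → (Fin N → ℝ))
    (A : Matrix (Fin n) (Fin s) ℝ) : ℝ :=
  ∑ t, |φ A t|

/-- `δ_r(A)`: the ℓ¹ distance from `φ(A)` to the set of `r`-sparse vectors. -/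
noncomputable def deltaR {n s N : ℕ} (φ : Matrix (Fin n) (Fin s) ℝ → (Fin N → ℝ))
    (r : ℕ) (A : Matrix (Fin n) (Fin s) ℝ) : ℝ :=
  sInf {c : ℝ | ∃ w : Fin N → ℝ,
    (Finset.univ.filter (fun t => w t ≠ 0)).card ≤ r ∧ c = ∑ t, |φ A t - w t|}

/-- Fundamental inequality (Lemma `INEQ`): if `ξ_r < 1/2` then
`‖φ(A')−φ(A)‖₁ ≤ (J(A')−J(A)+2δ_r(A))/(1−2ξ_r)` for all `A, A'`. -/
theorem stmt_4 {n s N : ℕ} (φ : Matrix (Fin n) (Fin s) ℝ → (Fin N → ℝ))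
    (r : ℕ) (hxi : xi φ r < 1 / 2)
    (A A' : Matrix (Fin n) (Fin s) ℝ) :
    (∑ t, |φ A' t - φ A t|) ≤
      (1 / (1 - 2 * xi φ r)) * (Jcost φ A' - Jcost φ A + 2 * deltaR φ r A) := by
  set ξ := xi φ r with hξdef
  have hpos : 0 < 1 - 2 * ξ := by linarith
  -- ratio bound: any restricted sum is ≤ ξ times the full sum
  have hrat : ∀ T : Finset (Fin N), T.card ≤ r → φ A' ≠ φ A →
      (∑ t ∈ T, |φ A' t - φ A t|) ≤ ξ * (∑ t, |φ A' t - φ A t|) := by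
    intro T hcard hne
    have hDpos : 0 < ∑ t, |φ A' t - φ A t| := by
      rcases Function.ne_iff.mp hne with ⟨t0, ht0⟩
      have : 0 < |φ A' t0 - φ A t0| := abs_pos.mpr (sub_ne_zero.mpr ht0)
      exact Finset.sum_pos' (fun t _ => abs_nonneg _) ⟨t0, Finset.mem_univ t0, this⟩
    have hbdd : BddAbove {c : ℝ | ∃ B B' : Matrix (Fin n) (Fin s) ℝ, ∃ T : Finset (Fin N),
        φ B ≠ φ B' ∧ T.card ≤ r ∧
        c = (∑ t ∈ T, |φ B t - φ B' t|) / (∑ t, |φ B t - φ B' t|)} := by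
      refine ⟨1, ?_⟩
      rintro c ⟨B, B', S, hBne, hScard, rfl⟩
      have hDpos' : 0 < ∑ t, |φ B t - φ B' t| := by
        rcases Function.ne_iff.mp hBne with ⟨t0, ht0⟩
        have : 0 < |φ B t0 - φ B' t0| := abs_pos.mpr (sub_ne_zero.mpr ht0)
        exact Finset.sum_pos' (fun t _ => abs_nonneg _) ⟨t0, Finset.mem_univ t0, this⟩
      rw [div_le_one hDpos']
      exact Finset.sum_le_sum_of_subset_of_nonneg (Finset.subset_univ S)
        (fun t _ _ => abs_nonneg _)
    have hmem : (∑ t ∈ T, |φ A' t - φ A t|) / (∑ t, |φ A' t - φ A t|) ∈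
        {c : ℝ | ∃ B B' : Matrix (Fin n) (Fin s) ℝ, ∃ T : Finset (Fin N),
          φ B ≠ φ B' ∧ T.card ≤ r ∧
          c = (∑ t ∈ T, |φ B t - φ B' t|) / (∑ t, |φ B t - φ B' t|)} :=
      ⟨A', A, T, hne, hcard, rfl⟩
    have hle : (∑ t ∈ T, |φ A' t - φ A t|) / (∑ t, |φ A' t - φ A t|) ≤ ξ :=
      le_csSup hbdd hmem
    rwa [div_le_iff₀ hDpos] at hle
  -- key inequality for each admissible w
  have key : ∀ c ∈ {c : ℝ | ∃ w : Fin N → ℝ,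
      (Finset.univ.filter (fun t => w t ≠ 0)).card ≤ r ∧ c = ∑ t, |φ A t - w t|},
      (1 - 2 * ξ) * (∑ t, |φ A' t - φ A t|) ≤ Jcost φ A' - Jcost φ A + 2 * c := by
    rintro c ⟨w, hwcard, rfl⟩
    set T := Finset.univ.filter (fun t => w t ≠ 0) with hT
    have hw0 : ∀ t ∈ Tᶜ, w t = 0 := by
      intro t ht
      have := Finset.mem_compl.mp ht
      simpa [hT] using this
    -- abbreviations
    have hsplitJ' : Jcost φ A' = (∑ t ∈ T, |φ A' t|) + ∑ t ∈ Tᶜ, |φ A' t| :=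
      (Finset.sum_add_sum_compl T _).symm
    have hsplitJ : Jcost φ A = (∑ t ∈ T, |φ A t|) + ∑ t ∈ Tᶜ, |φ A t| :=
      (Finset.sum_add_sum_compl T _).symm
    have hsplitH : (∑ t, |φ A' t - φ A t|) =
        (∑ t ∈ T, |φ A' t - φ A t|) + ∑ t ∈ Tᶜ, |φ A' t - φ A t| :=
      (Finset.sum_add_sum_compl T _).symm
    have hsplitD : (∑ t, |φ A t - w t|) =
        (∑ t ∈ T, |φ A t - w t|) + ∑ t ∈ Tᶜ, |φ A t - w t| :=
      (Finset.sum_add_sum_compl T _).symm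
    have hb2d2 : (∑ t ∈ Tᶜ, |φ A t|) = ∑ t ∈ Tᶜ, |φ A t - w t| :=
      Finset.sum_congr rfl (fun t ht => by rw [hw0 t ht, sub_zero])
    have hb1 : (∑ t ∈ T, |φ A t|) ≤
        (∑ t ∈ T, |φ A' t|) + ∑ t ∈ T, |φ A' t - φ A t| := by
      rw [← Finset.sum_add_distrib]
      refine Finset.sum_le_sum (fun t _ => ?_)
      calc |φ A t| = |φ A' t - (φ A' t - φ A t)| := by ring_nf
        _ ≤ |φ A' t| + |φ A' t - φ A t| := abs_sub _ _
    have hh2 : (∑ t ∈ Tᶜ, |φ A' t - φ A t|) ≤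
        (∑ t ∈ Tᶜ, |φ A' t|) + ∑ t ∈ Tᶜ, |φ A t| := by
      rw [← Finset.sum_add_distrib]
      exact Finset.sum_le_sum (fun t _ => abs_sub _ _)
    have hd1 : 0 ≤ ∑ t ∈ T, |φ A t - w t| :=
      Finset.sum_nonneg (fun t _ => abs_nonneg _)
    by_cases hne : φ A' = φ A
    · have hzero : (∑ t, |φ A' t - φ A t|) = 0 := by
        simp [hne]
      have hJ : Jcost φ A' = Jcost φ A := by unfold Jcost; rw [hne]
      have hcnn : 0 ≤ ∑ t, |φ A t - w t| :=
        Finset.sum_nonneg (fun t _ => abs_nonneg _)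
      rw [hzero, hJ]
      linarith
    · have hξT : (∑ t ∈ T, |φ A' t - φ A t|) ≤ ξ * (∑ t, |φ A' t - φ A t|) :=
        hrat T (by simpa [hT] using hwcard) hne
      have hd2 : 0 ≤ ∑ t ∈ Tᶜ, |φ A t - w t| :=
        Finset.sum_nonneg (fun t _ => abs_nonneg _)
      nlinarith [hsplitJ', hsplitJ, hsplitH, hsplitD, hb2d2, hb1, hh2, hd1, hξT]
  -- pass to the infimum
  have hne : {c : ℝ | ∃ w : Fin N → ℝ,
      (Finset.univ.filter (fun t => w t ≠ 0)).card ≤ r ∧ c = ∑ t, |φ A t - w t|}.Nonempty := by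
    refine ⟨∑ t, |φ A t - (0 : Fin N → ℝ) t|, 0, ?_, rfl⟩
    simp
  have hinf : ((1 - 2 * ξ) * (∑ t, |φ A' t - φ A t|) - (Jcost φ A' - Jcost φ A)) / 2 ≤
      deltaR φ r A := by
    refine le_csInf hne (fun c hc => ?_)
    have := key c hc
    linarith
  have hfinal : (1 - 2 * ξ) * (∑ t, |φ A' t - φ A t|) ≤
      Jcost φ A' - Jcost φ A + 2 * deltaR φ r A := by linarith
  rw [div_mul_eq_mul_div, one_mul, le_div_iff₀ hpos]
  linarith [mul_comm (∑ t, |φ A' t - φ A t|) (1 - 2 * ξ)]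
end

section
/- Let φ : ℝ^{n×s} → ℝ^N, J(A) = ‖φ(A)‖₁, δ_r(A) = inf{‖φ(A)−w‖₁ : ‖w‖₀ ≤ r}, and ξ_r the r-th concentration ratio of φ. If ξ_r < 1/2, then for all A, A' ∈ ℝ^{n×s}: ‖φ(A') − φ(A)‖₁ ≤ (1/(1 − 2ξ_r))·(δ_r(A') + δ_r(A)). -/
open Finset

lemma xi_bddAbove {n s N : ℕ} (φ : Matrix (Fin n) (Fin s) ℝ → (Fin N → ℝ)) (r : ℕ) :
    BddAbove {c : ℝ | ∃ A A' : Matrix (Fin n) (Fin s) ℝ, ∃ T : Finset (Fin N),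
      φ A ≠ φ A' ∧ T.card ≤ r ∧
      c = (∑ t ∈ T, |φ A t - φ A' t|) / (∑ t, |φ A t - φ A' t|)} := by
  refine ⟨1, ?_⟩
  rintro c ⟨A, A', T, hne, hT, rfl⟩
  have hd : 0 < ∑ t, |φ A t - φ A' t| := by
    obtain ⟨t, ht⟩ := Function.ne_iff.mp hne
    exact Finset.sum_pos' (fun i _ => abs_nonneg _)
      ⟨t, Finset.mem_univ t, abs_pos.mpr (sub_ne_zero.mpr ht)⟩
  rw [div_le_one hd]
  exact Finset.sum_le_sum_of_subset_of_nonneg (Finset.subset_univ T) (fun i _ _ => abs_nonneg _)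

lemma delta_set_nonempty {n s N : ℕ} (φ : Matrix (Fin n) (Fin s) ℝ → (Fin N → ℝ))
    (r : ℕ) (A : Matrix (Fin n) (Fin s) ℝ) :
    Set.Nonempty {c : ℝ | ∃ w : Fin N → ℝ,
      (Finset.univ.filter (fun t => w t ≠ 0)).card ≤ r ∧ c = ∑ t, |φ A t - w t|} := by
  refine ⟨∑ t, |φ A t - 0|, 0, ?_, rfl⟩
  simp

lemma deltaR_nonneg {n s N : ℕ} (φ : Matrix (Fin n) (Fin s) ℝ → (Fin N → ℝ))
    (r : ℕ) (A : Matrix (Fin n) (Fin s) ℝ) : 0 ≤ deltaR φ r A := by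
  refine le_csInf (delta_set_nonempty φ r A) ?_
  rintro c ⟨w, _, rfl⟩
  exact Finset.sum_nonneg fun i _ => abs_nonneg _

lemma one_sided {n s N : ℕ} (φ : Matrix (Fin n) (Fin s) ℝ → (Fin N → ℝ)) (r : ℕ)
    (A A' : Matrix (Fin n) (Fin s) ℝ) :
    (1 - 2 * xi φ r) * (∑ t, |φ A' t - φ A t|) ≤
      Jcost φ A' - Jcost φ A + 2 * deltaR φ r A := by
  by_cases hne : φ A' = φ A
  · have hD : (∑ t, |φ A' t - φ A t|) = 0 := by
      simp [hne]
    have hJ : Jcost φ A' = Jcost φ A := by unfold Jcost; rw [hne]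
    have := deltaR_nonneg φ r A
    rw [hD, hJ]
    linarith
  · set D := ∑ t, |φ A' t - φ A t| with hDdef
    have hD : 0 < D := by
      obtain ⟨t, ht⟩ := Function.ne_iff.mp hne
      exact Finset.sum_pos' (fun i _ => abs_nonneg _)
        ⟨t, Finset.mem_univ t, abs_pos.mpr (sub_ne_zero.mpr ht)⟩
    -- reduce to an inequality for each element of the delta set
    have key : ∀ c ∈ {c : ℝ | ∃ w : Fin N → ℝ,
        (Finset.univ.filter (fun t => w t ≠ 0)).card ≤ r ∧ c = ∑ t, |φ A t - w t|},
        ((1 - 2 * xi φ r) * D - (Jcost φ A' - Jcost φ A)) / 2 ≤ c := by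
      rintro c ⟨w, hw, rfl⟩
      set T := Finset.univ.filter (fun t => w t ≠ 0) with hTdef
      -- sum over complement of T of |φ A| is ≤ c
      have h3 : ∑ t ∈ Tᶜ, |φ A t| ≤ ∑ t, |φ A t - w t| := by
        have : ∑ t ∈ Tᶜ, |φ A t| = ∑ t ∈ Tᶜ, |φ A t - w t| := by
          refine Finset.sum_congr rfl fun t ht => ?_
          have : w t = 0 := by
            by_contra h
            exact (Finset.mem_compl.mp ht) (Finset.mem_filter.mpr ⟨Finset.mem_univ t, h⟩)
          rw [this, sub_zero]
        rw [this]
        exact Finset.sum_le_sum_of_subset_of_nonneg (Finset.subset_univ _)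
          (fun i _ _ => abs_nonneg _)
      -- xi bound
      have h4 : ∑ t ∈ T, |φ A' t - φ A t| ≤ xi φ r * D := by
        have hmem : (∑ t ∈ T, |φ A' t - φ A t|) / (∑ t, |φ A' t - φ A t|) ∈
            {c : ℝ | ∃ B B' : Matrix (Fin n) (Fin s) ℝ, ∃ T : Finset (Fin N),
              φ B ≠ φ B' ∧ T.card ≤ r ∧
              c = (∑ t ∈ T, |φ B t - φ B' t|) / (∑ t, |φ B t - φ B' t|)} :=
          ⟨A', A, T, hne, hw, rfl⟩
        have hle : (∑ t ∈ T, |φ A' t - φ A t|) / D ≤ xi φ r :=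
          le_csSup (xi_bddAbove φ r) hmem
        rwa [div_le_iff₀ hD] at hle
      have h1 : ∑ t ∈ T, |φ A t| ≤ ∑ t ∈ T, |φ A' t| + ∑ t ∈ T, |φ A' t - φ A t| := by
        rw [← Finset.sum_add_distrib]
        refine Finset.sum_le_sum fun t _ => ?_
        have := abs_sub_abs_le_abs_sub (φ A t) (φ A' t)
        have h := abs_sub_comm (φ A t) (φ A' t)
        linarith [abs_sub_abs_le_abs_sub (φ A t) (φ A' t), abs_sub_comm (φ A t) (φ A' t)]
      have h2 : ∑ t ∈ Tᶜ, |φ A' t - φ A t| ≤ ∑ t ∈ Tᶜ, |φ A' t| + ∑ t ∈ Tᶜ, |φ A t| := by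
        rw [← Finset.sum_add_distrib]
        exact Finset.sum_le_sum fun t _ => abs_sub (φ A' t) (φ A t)
      have hsplitD : ∑ t ∈ T, |φ A' t - φ A t| + ∑ t ∈ Tᶜ, |φ A' t - φ A t| = D :=
        Finset.sum_add_sum_compl T _
      have hsplitJ : ∑ t ∈ T, |φ A t| + ∑ t ∈ Tᶜ, |φ A t| = Jcost φ A :=
        Finset.sum_add_sum_compl T _
      have hsplitJ' : ∑ t ∈ T, |φ A' t| + ∑ t ∈ Tᶜ, |φ A' t| = Jcost φ A' :=
        Finset.sum_add_sum_compl T _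
      linarith
    have hfin : ((1 - 2 * xi φ r) * D - (Jcost φ A' - Jcost φ A)) / 2 ≤ deltaR φ r A :=
      le_csInf (delta_set_nonempty φ r A) key
    linarith

/-- Symmetrized inequality: if `ξ_r < 1/2` then
`‖φ(A')−φ(A)‖₁ ≤ (δ_r(A')+δ_r(A))/(1−2ξ_r)` for all `A, A'`. -/
theorem stmt_5 {n s N : ℕ} (φ : Matrix (Fin n) (Fin s) ℝ → (Fin N → ℝ))
    (r : ℕ) (hxi : xi φ r < 1 / 2)
    (A A' : Matrix (Fin n) (Fin s) ℝ) :
    (∑ t, |φ A' t - φ A t|) ≤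
      (1 / (1 - 2 * xi φ r)) * (deltaR φ r A' + deltaR φ r A) := by
  have h1 := one_sided φ r A A'
  have h2 := one_sided φ r A' A
  have hsym : (∑ t, |φ A t - φ A' t|) = ∑ t, |φ A' t - φ A t| := by
    exact Finset.sum_congr rfl fun t _ => abs_sub_comm _ _
  rw [hsym] at h2
  have hpos : 0 < 1 - 2 * xi φ r := by linarith
  rw [one_div, inv_mul_eq_div, le_div_iff₀ hpos]
  linarith
end

section
/- Let φ : ℝ^{n×s} → ℝ^N, J(A) = ‖φ(A)‖₁, δ_r(A) = inf{‖φ(A)−w‖₁ : ‖w‖₀ ≤ r}, and ξ_r the r-th concentration ratio of φ. Suppose ξ_r < 1/2 and that Â minimizes J over ℝ^{n×s}. Then for every A ∈ ℝ^{n×s}: ‖φ(A) − φ(Â)‖₁ ≤ (2/(1 − 2ξ_r))·δ_r(A). -/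
open Finset

lemma den_pos {N : ℕ} {u v : Fin N → ℝ} (h : u ≠ v) :
    0 < ∑ t, |u t - v t| := by
  have : ∃ t, u t ≠ v t := by
    by_contra hc; push_neg at hc; exact h (funext hc)
  obtain ⟨t0, ht0⟩ := this
  exact Finset.sum_pos' (fun t _ => abs_nonneg _)
    ⟨t0, Finset.mem_univ _, abs_pos.mpr (sub_ne_zero.mpr ht0)⟩

/-- Distance to a global minimizer: if `ξ_r < 1/2` and `Â` minimizes `J`, then
`‖φ(A)−φ(Â)‖₁ ≤ 2 δ_r(A)/(1−2ξ_r)` for every `A`. -/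
theorem stmt_6 {n s N : ℕ} (φ : Matrix (Fin n) (Fin s) ℝ → (Fin N → ℝ))
    (r : ℕ) (hxi : xi φ r < 1 / 2)
    (Ahat : Matrix (Fin n) (Fin s) ℝ) (hmin : ∀ A, Jcost φ Ahat ≤ Jcost φ A)
    (A : Matrix (Fin n) (Fin s) ℝ) :
    (∑ t, |φ A t - φ Ahat t|) ≤ (2 / (1 - 2 * xi φ r)) * deltaR φ r A := by
  set ξ := xi φ r with hξdef
  have hξpos : 0 < 1 - 2 * ξ := by linarith
  set E := ∑ t, |φ A t - φ Ahat t| with hEdef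
  have hE0 : 0 ≤ E := Finset.sum_nonneg fun t _ => abs_nonneg _
  have key : ∀ w : Fin N → ℝ, (Finset.univ.filter (fun t => w t ≠ 0)).card ≤ r →
      (1 - 2 * ξ) * E ≤ 2 * ∑ t, |φ A t - w t| := by
    intro w hw
    set T := Finset.univ.filter (fun t => w t ≠ 0) with hTdef
    -- dT ≤ ξ * E
    have hTd : ∑ t ∈ T, |φ A t - φ Ahat t| ≤ ξ * E := by
      by_cases hne : φ A = φ Ahat
      · have hE : E = 0 := by simp [hEdef, hne]
        have : ∑ t ∈ T, |φ A t - φ Ahat t| = 0 := by simp [hne]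
        have hξ0 : 0 ≤ ξ := by
          apply Real.sSup_nonneg
          rintro c ⟨A1, A2, T', hne', hcard', rfl⟩
          exact div_nonneg (Finset.sum_nonneg fun t _ => abs_nonneg _) (den_pos hne').le
        rw [this, hE]; simp
      · have hden : 0 < E := den_pos hne
        have hbdd : BddAbove {c : ℝ | ∃ A A' : Matrix (Fin n) (Fin s) ℝ,
            ∃ T : Finset (Fin N), φ A ≠ φ A' ∧ T.card ≤ r ∧
            c = (∑ t ∈ T, |φ A t - φ A' t|) / (∑ t, |φ A t - φ A' t|)} := by
          refine ⟨1, ?_⟩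
          rintro c ⟨A1, A2, T', hne', hcard', rfl⟩
          rw [div_le_one (den_pos hne')]
          exact Finset.sum_le_sum_of_subset_of_nonneg (Finset.subset_univ _)
            (fun t _ _ => abs_nonneg _)
        have hmem : (∑ t ∈ T, |φ A t - φ Ahat t|) / E ∈ {c : ℝ | ∃ A A' : Matrix (Fin n) (Fin s) ℝ,
            ∃ T : Finset (Fin N), φ A ≠ φ A' ∧ T.card ≤ r ∧
            c = (∑ t ∈ T, |φ A t - φ A' t|) / (∑ t, |φ A t - φ A' t|)} :=
          ⟨A, Ahat, T, hne, hw, rfl⟩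
        have hle : (∑ t ∈ T, |φ A t - φ Ahat t|) / E ≤ ξ := le_csSup hbdd hmem
        rw [div_le_iff₀ hden] at hle
        linarith [hle, mul_comm ξ E]
    -- named partial sums
    have Fsum : ∀ f : Fin N → ℝ, ∑ t ∈ T, f t + ∑ t ∈ Tᶜ, f t = ∑ t, f t :=
      fun f => Finset.sum_add_sum_compl T f
    have F1 : ∑ t, |φ Ahat t| ≤ ∑ t, |φ A t| := hmin A
    have F2 : ∑ t ∈ T, |φ A t| ≤ ∑ t ∈ T, |φ Ahat t| + ∑ t ∈ T, |φ A t - φ Ahat t| := by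
      rw [← Finset.sum_add_distrib]
      refine Finset.sum_le_sum fun t _ => ?_
      have := abs_add_le (φ Ahat t) (φ A t - φ Ahat t)
      simpa [add_comm] using this
    have F3 : ∑ t ∈ Tᶜ, |φ A t - φ Ahat t| ≤ ∑ t ∈ Tᶜ, |φ A t| + ∑ t ∈ Tᶜ, |φ Ahat t| := by
      rw [← Finset.sum_add_distrib]
      exact Finset.sum_le_sum fun t _ => abs_sub (φ A t) (φ Ahat t)
    have F4 : ∑ t ∈ Tᶜ, |φ A t| = ∑ t ∈ Tᶜ, |φ A t - w t| := by
      refine Finset.sum_congr rfl fun t ht => ?_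
      have hw0 : w t = 0 := by
        simp only [hTdef, Finset.mem_compl, Finset.mem_filter, Finset.mem_univ,
          true_and, not_not] at ht
        exact ht
      rw [hw0, sub_zero]
    have F5 : 0 ≤ ∑ t ∈ T, |φ A t - w t| := Finset.sum_nonneg fun t _ => abs_nonneg _
    have F6 := Fsum (fun t => |φ A t - φ Ahat t|)
    have F7 := Fsum (fun t => |φ A t|)
    have F8 := Fsum (fun t => |φ Ahat t|)
    have F9 := Fsum (fun t => |φ A t - w t|)
    rw [← hEdef] at F6
    linarith
  have hδ : (1 - 2 * ξ) / 2 * E ≤ deltaR φ r A := by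
    refine le_csInf ⟨∑ t, |φ A t - 0|, ⟨0, by simp, rfl⟩⟩ ?_
    rintro c ⟨w, hw, rfl⟩
    have := key w hw
    linarith
  have h2δ : (1 - 2 * ξ) * E ≤ 2 * deltaR φ r A := by linarith
  rw [div_mul_eq_mul_div, le_div_iff₀ hξpos]
  linarith [mul_comm E (1 - 2 * ξ)]
end

section
/- Let φ : ℝ^{n×s} → ℝ^N with J(A) = ‖φ(A)‖₁ and ξ_r < 1/2 its r-th concentration ratio. If there exists à with ‖φ(Ã)‖₀ ≤ r, then the set of global minimizers of J equals {A : ‖φ(A)‖₀ ≤ r} and also equals {A : φ(A) = φ(Ã)}. -/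
open Finset

lemma l1_pos {n s N : ℕ} (φ : Matrix (Fin n) (Fin s) ℝ → (Fin N → ℝ))
    {A A' : Matrix (Fin n) (Fin s) ℝ} (h : φ A ≠ φ A') :
    0 < ∑ t, |φ A t - φ A' t| := by
  obtain ⟨t, ht⟩ : ∃ t, φ A t ≠ φ A' t := by
    by_contra hc
    push_neg at hc
    exact h (funext hc)
  refine Finset.sum_pos' (fun i _ => abs_nonneg _) ⟨t, Finset.mem_univ t, ?_⟩
  rw [abs_pos]
  exact sub_ne_zero_of_ne ht

lemma key {n s N : ℕ} (φ : Matrix (Fin n) (Fin s) ℝ → (Fin N → ℝ))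
    (r : ℕ) (hxi : xi φ r < 1 / 2)
    {A A' : Matrix (Fin n) (Fin s) ℝ} (h : φ A ≠ φ A')
    {T : Finset (Fin N)} (hT : T.card ≤ r) :
    ∑ t ∈ T, |φ A t - φ A' t| < (1 / 2) * ∑ t, |φ A t - φ A' t| := by
  have hd : 0 < ∑ t, |φ A t - φ A' t| := l1_pos φ h
  set S := {c : ℝ | ∃ A A' : Matrix (Fin n) (Fin s) ℝ, ∃ T : Finset (Fin N),
    φ A ≠ φ A' ∧ T.card ≤ r ∧
    c = (∑ t ∈ T, |φ A t - φ A' t|) / (∑ t, |φ A t - φ A' t|)} with hS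
  have hbdd : BddAbove S := by
    refine ⟨1, fun c hc => ?_⟩
    obtain ⟨B, B', U, hBB, hU, rfl⟩ := hc
    have hd' : 0 < ∑ t, |φ B t - φ B' t| := l1_pos φ hBB
    rw [div_le_one hd']
    exact Finset.sum_le_sum_of_subset_of_nonneg (Finset.subset_univ U)
      (fun i _ _ => abs_nonneg _)
  have hmem : (∑ t ∈ T, |φ A t - φ A' t|) / (∑ t, |φ A t - φ A' t|) ∈ S :=
    ⟨A, A', T, h, hT, rfl⟩
  have := (le_csSup hbdd hmem).trans_lt hxi
  rw [div_lt_iff₀ hd] at this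
  linarith [this]

lemma sparse_eq {n s N : ℕ} (φ : Matrix (Fin n) (Fin s) ℝ → (Fin N → ℝ))
    (r : ℕ) (hxi : xi φ r < 1 / 2)
    {A A' : Matrix (Fin n) (Fin s) ℝ}
    (hA : (Finset.univ.filter (fun t => φ A t ≠ 0)).card ≤ r)
    (hA' : (Finset.univ.filter (fun t => φ A' t ≠ 0)).card ≤ r) :
    φ A = φ A' := by
  by_contra h
  set T1 := Finset.univ.filter (fun t => φ A t ≠ 0) with hT1
  set T2 := Finset.univ.filter (fun t => φ A' t ≠ 0) with hT2
  have h1 := key φ r hxi h hA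
  have h2 := key φ r hxi h hA'
  have hd : 0 < ∑ t, |φ A t - φ A' t| := l1_pos φ h
  have hsub : ∑ t, |φ A t - φ A' t| = ∑ t ∈ T1 ∪ T2, |φ A t - φ A' t| := by
    refine (Finset.sum_subset (Finset.subset_univ _) ?_).symm
    intro t _ ht
    simp only [Finset.mem_union, hT1, hT2, Finset.mem_filter, Finset.mem_univ,
      true_and, not_or, not_not] at ht
    rw [ht.1, ht.2, sub_zero, abs_zero]
  have hle : ∑ t ∈ T1 ∪ T2, |φ A t - φ A' t|
      ≤ (∑ t ∈ T1, |φ A t - φ A' t|) + ∑ t ∈ T2, |φ A t - φ A' t| := by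
    rw [← Finset.union_sdiff_self_eq_union, Finset.sum_union Finset.disjoint_sdiff]
    have : ∑ t ∈ T2 \ T1, |φ A t - φ A' t| ≤ ∑ t ∈ T2, |φ A t - φ A' t| :=
      Finset.sum_le_sum_of_subset_of_nonneg Finset.sdiff_subset (fun i _ _ => abs_nonneg _)
    linarith
  linarith

lemma Jcost_eq {n s N : ℕ} (φ : Matrix (Fin n) (Fin s) ℝ → (Fin N → ℝ))
    {A B : Matrix (Fin n) (Fin s) ℝ} (h : φ A = φ B) : Jcost φ A = Jcost φ B := by
  simp [Jcost, h]

lemma min_lt {n s N : ℕ} (φ : Matrix (Fin n) (Fin s) ℝ → (Fin N → ℝ))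
    (r : ℕ) (hxi : xi φ r < 1 / 2)
    {Atil : Matrix (Fin n) (Fin s) ℝ}
    (hAtil : (Finset.univ.filter (fun t => φ Atil t ≠ 0)).card ≤ r)
    {B : Matrix (Fin n) (Fin s) ℝ} (hB : φ B ≠ φ Atil) :
    Jcost φ Atil < Jcost φ B := by
  set T := Finset.univ.filter (fun t => φ Atil t ≠ 0) with hT
  have h : φ Atil ≠ φ B := fun he => hB he.symm
  have hkey := key φ r hxi h hAtil
  set d := ∑ t, |φ Atil t - φ B t| with hd
  have hJA : Jcost φ Atil = ∑ t ∈ T, |φ Atil t| := by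
    refine (Finset.sum_subset (Finset.subset_univ _) ?_).symm
    intro t _ ht
    simp only [hT, Finset.mem_filter, Finset.mem_univ, true_and, not_not] at ht
    simp [ht]
  have h1 : Jcost φ Atil ≤ (∑ t ∈ T, |φ B t|) + ∑ t ∈ T, |φ Atil t - φ B t| := by
    rw [hJA, ← Finset.sum_add_distrib]
    refine Finset.sum_le_sum fun t _ => ?_
    have := abs_sub_abs_le_abs_sub (φ Atil t) (φ B t)
    linarith [this]
  have hsplit : Jcost φ B = (∑ t ∈ T, |φ B t|) + ∑ t ∈ Finset.univ \ T, |φ B t| := by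
    rw [Jcost, ← Finset.sum_union Finset.disjoint_sdiff,
      Finset.union_sdiff_of_subset (Finset.subset_univ _)]
  have hcompl : ∑ t ∈ Finset.univ \ T, |φ B t| = ∑ t ∈ Finset.univ \ T, |φ Atil t - φ B t| := by
    refine Finset.sum_congr rfl fun t ht => ?_
    simp only [Finset.mem_sdiff, hT, Finset.mem_filter, Finset.mem_univ, true_and,
      not_not] at ht
    rw [ht, zero_sub, abs_neg]
  have hdsplit : d = (∑ t ∈ T, |φ Atil t - φ B t|) + ∑ t ∈ Finset.univ \ T, |φ Atil t - φ B t| := by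
    rw [hd, ← Finset.sum_union Finset.disjoint_sdiff,
      Finset.union_sdiff_of_subset (Finset.subset_univ _)]
  rw [hsplit, hcompl]
  linarith

/-- If `ξ_r < 1/2` and some `Ã` satisfies `‖φ(Ã)‖₀ ≤ r`, then the set of global
minimizers of `J` equals `{A : ‖φ(A)‖₀ ≤ r}` and equals `{A : φ(A) = φ(Ã)}`. -/
theorem stmt_7 {n s N : ℕ} (φ : Matrix (Fin n) (Fin s) ℝ → (Fin N → ℝ))
    (r : ℕ) (hxi : xi φ r < 1 / 2)
    (Atil : Matrix (Fin n) (Fin s) ℝ)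
    (hAtil : (Finset.univ.filter (fun t => φ Atil t ≠ 0)).card ≤ r) :
    {A : Matrix (Fin n) (Fin s) ℝ | ∀ B, Jcost φ A ≤ Jcost φ B}
        = {A | (Finset.univ.filter (fun t => φ A t ≠ 0)).card ≤ r} ∧
      {A : Matrix (Fin n) (Fin s) ℝ | ∀ B, Jcost φ A ≤ Jcost φ B}
        = {A | φ A = φ Atil} := by
  have hmin_eq : {A : Matrix (Fin n) (Fin s) ℝ | ∀ B, Jcost φ A ≤ Jcost φ B}
      = {A | φ A = φ Atil} := by
    ext A
    simp only [Set.mem_setOf_eq]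
    constructor
    · intro hA
      by_contra hne
      exact absurd (hA Atil) (not_le.2 (min_lt φ r hxi hAtil hne))
    · intro hA B
      rw [Jcost_eq φ hA]
      rcases eq_or_ne (φ B) (φ Atil) with he | he
      · rw [Jcost_eq φ he]
      · exact (min_lt φ r hxi hAtil he).le
  have hsparse_eq : {A : Matrix (Fin n) (Fin s) ℝ |
      (Finset.univ.filter (fun t => φ A t ≠ 0)).card ≤ r} = {A | φ A = φ Atil} := by
    ext A
    simp only [Set.mem_setOf_eq]
    constructor
    · intro hA
      exact sparse_eq φ r hxi hA hAtil
    · intro hA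
      calc #(filter (fun t => φ A t ≠ 0) univ)
          = #(filter (fun t => φ Atil t ≠ 0) univ) := by
            congr 1
            exact Finset.filter_congr fun t _ => by rw [hA]
        _ ≤ r := hAtil
  exact ⟨hmin_eq.trans hsparse_eq.symm, hmin_eq⟩
end

section
/- Data setting: given points (x_t, y_t) ∈ ℝ^n × ℝ for t ∈ {1,...,N}, for each A = [a_1,...,a_s] ∈ ℝ^{n×s} let σ_A : {1,...,N} → {1,...,s} satisfy σ_A(t) ∈ argmin_i |y_t − x_tᵀa_i|, let I_i(A) = {t : σ_A(t) = i}, and let φ(A) ∈ ℝ^N have entries y_t − x_tᵀa_{σ_A(t)}. Let X = [x_1,...,x_N] and ν_n(X) its n-genericity index. Claim: if à = [ã_1,...,ã_s] has pairwise distinct columns and min_i |I_i(Ã)| ≥ s·ν_n(X), then for any A ∈ ℝ^{n×s}, φ(A) = φ(Ã) implies that the set of columns of A equals the set of columns of Ã. -/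
open Finset

open Matrix in
theorem aux_span {n N : ℕ} (x : Fin N → Fin n → ℝ) (ν : ℕ)
    (hν : ∀ S : Finset (Fin N), S.card = ν →
        ((Matrix.of (fun k t => x t k) : Matrix (Fin n) (Fin N) ℝ).submatrix id
          (fun j : {t // t ∈ S} => j.1)).rank = n)
    (T : Finset (Fin N)) (hT : ν ≤ T.card) (v : Fin n → ℝ)
    (hv : ∀ t ∈ T, ∑ k, x t k * v k = 0) : v = 0 := by
  obtain ⟨S, hST, hScard⟩ := Finset.exists_subset_card_eq hT
  set M := ((Matrix.of (fun k t => x t k) : Matrix (Fin n) (Fin N) ℝ).submatrix id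
      (fun j : {t // t ∈ S} => j.1)) with hM
  have hr : M.rank = n := hν S hScard
  have hrange : LinearMap.range M.mulVecLin = ⊤ := by
    apply Submodule.eq_top_of_finrank_eq
    rw [Module.finrank_fintype_fun_eq_card, Fintype.card_fin]
    exact hr
  obtain ⟨w, hw⟩ := LinearMap.range_eq_top.mp hrange v
  rw [Matrix.mulVecLin_apply] at hw
  have hnull : M.vecMul v = 0 := by
    funext j
    have := hv j.1 (hST j.2)
    simp only [Matrix.vecMul, dotProduct, hM, Matrix.submatrix_apply, Matrix.of_apply, id, Pi.zero_apply]
    rw [← this]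
    exact Finset.sum_congr rfl fun k _ => mul_comm _ _
  have h0 : v ⬝ᵥ v = 0 := by
    nth_rewrite 2 [← hw]
    rw [Matrix.dotProduct_mulVec, hnull, zero_dotProduct]
  exact dotProduct_self_eq_zero.mp h0


/-- Injectivity lemma (Lemma `injectivity`): if `Ã` has pairwise distinct columns and
every `I_i(Ã)` has at least `s·ν_n(X)` elements, then `φ(A) = φ(Ã)` implies that the
set of columns of `A` equals the set of columns of `Ã`. -/
theorem stmt_9 (n s N : ℕ) (hs : 0 < s)
    (x : Fin N → Fin n → ℝ) (y : Fin N → ℝ)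
    -- the regressor matrix `X = [x_1 ⋯ x_N]` has full row rank
    (hrank : (Matrix.of (fun k t => x t k) : Matrix (Fin n) (Fin N) ℝ).rank = n)
    -- `σ A` is a switching signal satisfying the argmin condition for each `A`
    (σ : Matrix (Fin n) (Fin s) ℝ → Fin N → Fin s)
    (hσ : ∀ (A : Matrix (Fin n) (Fin s) ℝ) (t : Fin N) (i : Fin s),
      |y t - ∑ k, x t k * A k (σ A t)| ≤ |y t - ∑ k, x t k * A k i|)
    -- `ν` is the `n`-genericity index of `X`
    (ν : ℕ)
    (hν : IsLeast {m : ℕ | ∀ S : Finset (Fin N), S.card = m →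
        ((Matrix.of (fun k t => x t k) : Matrix (Fin n) (Fin N) ℝ).submatrix id
          (fun j : {t // t ∈ S} => j.1)).rank = n} ν)
    (Atil : Matrix (Fin n) (Fin s) ℝ)
    -- `Ã` has pairwise distinct columns
    (hdist : ∀ i j : Fin s, (fun k => Atil k i) = (fun k => Atil k j) → i = j)
    -- `min_i |I_i(Ã)| ≥ s · ν_n(X)`
    (hcount : ∀ i : Fin s, s * ν ≤ (Finset.univ.filter (fun t => σ Atil t = i)).card)
    (A : Matrix (Fin n) (Fin s) ℝ)
    -- `φ(A) = φ(Ã)`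
    (hphi : ∀ t : Fin N,
      y t - ∑ k, x t k * A k (σ A t) = y t - ∑ k, x t k * Atil k (σ Atil t)) :
    {c : Fin n → ℝ | ∃ i, c = fun k => A k i} =
      {c : Fin n → ℝ | ∃ i, c = fun k => Atil k i} := by
  have hsne : (Finset.univ : Finset (Fin s)).Nonempty := ⟨⟨0, hs⟩, mem_univ _⟩
  have key : ∀ i : Fin s, ∃ j : Fin s, (fun k => A k j) = fun k => Atil k i := by
    intro i
    obtain ⟨j, -, hj⟩ := Finset.exists_le_card_fiber_of_mul_le_card_of_maps_to
      (s := Finset.univ.filter (fun t => σ Atil t = i)) (t := (Finset.univ : Finset (Fin s)))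
      (f := σ A) (fun a _ => mem_univ _) hsne (by simpa using hcount i)
    refine ⟨j, ?_⟩
    have hv : (fun k => A k j - Atil k i) = 0 := by
      refine aux_span x ν hν.1 _ hj _ ?_
      intro t ht
      simp only [mem_filter, mem_univ, true_and] at ht
      have h1 := hphi t
      rw [ht.1, ht.2] at h1
      have heq : ∑ k, x t k * A k j = ∑ k, x t k * Atil k i := by linarith
      simp only [mul_sub, Finset.sum_sub_distrib, heq, sub_self]
    funext k
    have := congrFun hv k
    simp only [Pi.zero_apply] at this
    linarith
  choose f hf using key
  have hinj : Function.Injective f := by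
    intro i i' h
    apply hdist
    rw [← hf i, ← hf i', h]
  have hsurj : Function.Surjective f := Finite.surjective_of_injective hinj
  ext c
  simp only [Set.mem_setOf_eq]
  constructor
  · rintro ⟨j, rfl⟩
    obtain ⟨i, rfl⟩ := hsurj j
    exact ⟨i, (hf i).symm ▸ rfl⟩
  · rintro ⟨i, rfl⟩
    exact ⟨f i, (hf i).symm⟩
end

section
/- Let f : ℝ^n → ℝ₊ be a continuous function such that (i) f(x) = 0 iff x = 0, and (ii) there exists a class-K∞ function q with f(x) ≥ q(1/λ)·f(λx) for all x ∈ ℝ^n and all λ > 0. Then for any norm ‖·‖ on ℝ^n there exists a constant α > 0 such that f(x) ≥ α·q(‖x‖) for all x ∈ ℝ^n. -/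
open Filter

/-- Lemma `minimum-value`: if `f : ℝ^n → ℝ₊` is continuous, positive definite and
relaxedly homogeneous with respect to a class-`K∞` function `q`, then for any norm
`‖·‖` on `ℝ^n` there is `α > 0` with `f(x) ≥ α · q(‖x‖)`. -/
theorem stmt_11 (n : ℕ) (f : (Fin n → ℝ) → ℝ)
    (hf_cont : Continuous f) (hf_nonneg : ∀ x, 0 ≤ f x)
    (hf_zero : ∀ x, f x = 0 ↔ x = 0)
    -- `q` is a class-`K∞` function (on the nonnegative reals)
    (q : ℝ → ℝ)
    (hq_nonneg : ∀ t, 0 ≤ t → 0 ≤ q t)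
    (hq_cont : ContinuousOn q (Set.Ici 0)) (hq0 : q 0 = 0)
    (hq_mono : StrictMonoOn q (Set.Ici 0))
    (hq_top : Tendsto q atTop atTop)
    -- relaxed homogeneity: `f(x) ≥ q(1/λ) f(λx)` for all `λ > 0`
    (hfq : ∀ (x : Fin n → ℝ) (lam : ℝ), 0 < lam → q (1 / lam) * f (lam • x) ≤ f x)
    -- an arbitrary norm on `ℝ^n`
    (Nrm : (Fin n → ℝ) → ℝ)
    (hN_add : ∀ x y, Nrm (x + y) ≤ Nrm x + Nrm y)
    (hN_smul : ∀ (c : ℝ) (x), Nrm (c • x) = |c| * Nrm x)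
    (hN_zero : ∀ x, Nrm x = 0 → x = 0) :
    ∃ α : ℝ, 0 < α ∧ ∀ x, α * q (Nrm x) ≤ f x := by
  classical
  have hN0 : Nrm 0 = 0 := by
    have := hN_smul 0 0
    simpa using this
  have hN_neg : ∀ x, Nrm (-x) = Nrm x := by
    intro x
    have := hN_smul (-1) x
    simpa using this
  have hN_nonneg : ∀ x, 0 ≤ Nrm x := by
    intro x
    have h := hN_add x (-x)
    rw [add_neg_cancel, hN0, hN_neg] at h
    linarith
  have hN_pos : ∀ x, x ≠ 0 → 0 < Nrm x := fun x hx =>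
    lt_of_le_of_ne (hN_nonneg x) (fun h => hx (hN_zero x h.symm))
  by_cases hn : n = 0
  · subst hn
    refine ⟨1, one_pos, fun x => ?_⟩
    have hx : x = 0 := Subsingleton.elim _ _
    rw [hx, hN0, hq0]
    simpa using hf_nonneg 0
  have hn' : 0 < n := Nat.pos_of_ne_zero hn
  -- subadditivity over finite sums
  have hsum : ∀ (s : Finset (Fin n)) (g : Fin n → (Fin n → ℝ)),
      Nrm (∑ i ∈ s, g i) ≤ ∑ i ∈ s, Nrm (g i) := by
    intro s g
    induction s using Finset.cons_induction with
    | empty => simp [hN0]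
    | cons a s ha ih =>
      rw [Finset.sum_cons, Finset.sum_cons]
      calc Nrm (g a + ∑ i ∈ s, g i) ≤ Nrm (g a) + Nrm (∑ i ∈ s, g i) := hN_add _ _
        _ ≤ Nrm (g a) + ∑ i ∈ s, Nrm (g i) := by linarith
  set C := ∑ i : Fin n, Nrm ((Pi.single i 1 : Fin n → ℝ)) with hC
  have hC_nonneg : 0 ≤ C := Finset.sum_nonneg fun i _ => hN_nonneg _
  have hNle : ∀ x, Nrm x ≤ C * ‖x‖ := by
    intro x
    have hx : x = ∑ i : Fin n, x i • (Pi.single i 1 : Fin n → ℝ) := by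
      ext j
      simp [Finset.sum_apply, Pi.single_apply, mul_comm]
    calc Nrm x = Nrm (∑ i : Fin n, x i • (Pi.single i 1 : Fin n → ℝ)) := by rw [← hx]
      _ ≤ ∑ i : Fin n, Nrm (x i • (Pi.single i 1 : Fin n → ℝ)) := hsum _ _
      _ ≤ ∑ i : Fin n, ‖x‖ * Nrm ((Pi.single i 1 : Fin n → ℝ)) := by
          apply Finset.sum_le_sum
          intro i _
          rw [hN_smul]
          exact mul_le_mul_of_nonneg_right (by simpa using norm_le_pi_norm x i)
            (hN_nonneg _)
      _ = C * ‖x‖ := by rw [hC, Finset.sum_mul]; exact Finset.sum_congr rfl fun i _ => mul_comm _ _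
  have hN_cont : Continuous Nrm := by
    have hlip : ∀ x y, dist (Nrm x) (Nrm y) ≤ (⟨C, hC_nonneg⟩ : NNReal) * dist x y := by
      intro x y
      rw [Real.dist_eq, dist_eq_norm]
      have h1 : Nrm x - Nrm y ≤ Nrm (x - y) := by
        have := hN_add y (x - y)
        rw [add_sub_cancel] at this
        linarith
      have h2 : Nrm y - Nrm x ≤ Nrm (x - y) := by
        have := hN_add x (y - x)
        rw [add_sub_cancel] at this
        have hxy : Nrm (y - x) = Nrm (x - y) := by rw [← hN_neg (x - y), neg_sub]
        linarith
      have h3 := hNle (x - y)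
      rw [abs_le]
      constructor <;> [skip; skip] <;> push_cast <;> linarith
    exact (LipschitzWith.of_dist_le_mul hlip).continuous
  -- reverse bound: c * ‖x‖ ≤ Nrm x
  have hsph : IsCompact (Metric.sphere (0 : Fin n → ℝ) 1) := isCompact_sphere 0 1
  have hsph_ne : (Metric.sphere (0 : Fin n → ℝ) 1).Nonempty := by
    have hv : (Pi.single (⟨0, hn'⟩ : Fin n) 1 : Fin n → ℝ) ≠ 0 := by
      intro h
      have := congrFun h ⟨0, hn'⟩
      simp at this
    set v := (Pi.single (⟨0, hn'⟩ : Fin n) 1 : Fin n → ℝ)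
    have hv' : ‖v‖ ≠ 0 := by simpa using hv
    refine ⟨‖v‖⁻¹ • v, ?_⟩
    simp [norm_smul, abs_of_nonneg (inv_nonneg.2 (norm_nonneg v)),
      inv_mul_cancel₀ hv']
  obtain ⟨z, hz, hzmin'⟩ := hsph.exists_isMinOn hsph_ne hN_cont.continuousOn
  have hzmin : ∀ y ∈ Metric.sphere (0 : Fin n → ℝ) 1, Nrm z ≤ Nrm y := fun y hy => hzmin' hy
  set c := Nrm z with hc
  have hz0 : z ≠ 0 := by
    intro h
    rw [h] at hz
    simp at hz
  have hc_pos : 0 < c := hN_pos z hz0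
  have hclow : ∀ x, c * ‖x‖ ≤ Nrm x := by
    intro x
    rcases eq_or_ne x 0 with rfl | hx
    · simp [hN0]
    · have hnx : 0 < ‖x‖ := norm_pos_iff.2 hx
      have hmem : ‖x‖⁻¹ • x ∈ Metric.sphere (0 : Fin n → ℝ) 1 := by
        simp [norm_smul, abs_of_nonneg (inv_nonneg.2 hnx.le), inv_mul_cancel₀ hnx.ne']
      have := hzmin _ hmem
      rw [hN_smul, abs_of_nonneg (inv_nonneg.2 hnx.le)] at this
      rw [mul_comm]
      calc ‖x‖ * c ≤ ‖x‖ * (‖x‖⁻¹ * Nrm x) := by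
            exact mul_le_mul_of_nonneg_left this hnx.le
        _ = Nrm x := by field_simp
  -- minimum of f on the Nrm-sphere
  have hS_compact : IsCompact {x : Fin n → ℝ | Nrm x = 1} := by
    apply Metric.isCompact_of_isClosed_isBounded
    · exact isClosed_eq hN_cont continuous_const
    · apply Bornology.IsBounded.subset
        (Metric.isBounded_closedBall (x := (0 : Fin n → ℝ)) (r := c⁻¹))
      intro x hx
      simp only [Set.mem_setOf_eq] at hx
      have h1 := hclow x
      rw [hx] at h1
      simp only [Metric.mem_closedBall, dist_zero_right]
      calc ‖x‖ = c⁻¹ * (c * ‖x‖) := by field_simp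
        _ ≤ c⁻¹ * 1 := mul_le_mul_of_nonneg_left h1 (inv_nonneg.2 hc_pos.le)
        _ = c⁻¹ := mul_one _
  have hS_ne : {x : Fin n → ℝ | Nrm x = 1}.Nonempty := by
    refine ⟨(Nrm z)⁻¹ • z, ?_⟩
    simp only [Set.mem_setOf_eq]
    rw [hN_smul, abs_of_nonneg (inv_nonneg.2 (hN_nonneg z))]
    exact inv_mul_cancel₀ hc_pos.ne'
  obtain ⟨w, hw, hwmin'⟩ := hS_compact.exists_isMinOn hS_ne hf_cont.continuousOn
  have hwmin : ∀ y ∈ {x : Fin n → ℝ | Nrm x = 1}, f w ≤ f y := fun y hy => hwmin' hy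
  set m := f w with hm
  have hw0 : w ≠ 0 := by
    intro h
    simp only [Set.mem_setOf_eq] at hw
    rw [h, hN0] at hw
    exact one_ne_zero hw.symm
  have hm_pos : 0 < m := by
    rcases lt_or_eq_of_le (hf_nonneg w) with h | h
    · exact h
    · exact absurd ((hf_zero w).1 h.symm) hw0
  refine ⟨m, hm_pos, fun x => ?_⟩
  rcases eq_or_ne x 0 with rfl | hx
  · rw [hN0, hq0, mul_zero]
    exact hf_nonneg 0
  · have hNx : 0 < Nrm x := hN_pos x hx
    have hlam : 0 < (Nrm x)⁻¹ := inv_pos.2 hNx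
    have key := hfq x (Nrm x)⁻¹ hlam
    rw [one_div, inv_inv] at key
    have hmem : (Nrm x)⁻¹ • x ∈ {y : Fin n → ℝ | Nrm y = 1} := by
      simp only [Set.mem_setOf_eq]
      rw [hN_smul, abs_of_nonneg hlam.le]
      exact inv_mul_cancel₀ hNx.ne'
    have hfm : m ≤ f ((Nrm x)⁻¹ • x) := hwmin _ hmem
    have hqpos : 0 ≤ q (Nrm x) := hq_nonneg _ hNx.le
    calc m * q (Nrm x) ≤ f ((Nrm x)⁻¹ • x) * q (Nrm x) :=
          mul_le_mul_of_nonneg_right hfm hqpos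
      _ = q (Nrm x) * f ((Nrm x)⁻¹ • x) := mul_comm _ _
      _ ≤ f x := key
end

section
/- Two-mode special case of comparability: let {I_1, I_2} and {I'_1, I'_2} be partitions of {1,...,N} with |I_1| ≥ 2m and |I_2| ≥ 2m for a positive integer m. If N ≥ 4m + | |I'_1| − |I'_2| |, then there exists a permutation π of {1,2} with |I_1 ∩ I'_{π(1)}| ≥ m and |I_2 ∩ I'_{π(2)}| ≥ m. -/
open Finset

/-- Two-mode comparability: if `{I_1,I_2}` and `{I'_1,I'_2}` partition `{1,…,N}`,
`|I_1|, |I_2| ≥ 2m` and `N ≥ 4m + ||I'_1| − |I'_2||`, then some permutation `π` of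
`{1,2}` satisfies `|I_1 ∩ I'_{π(1)}| ≥ m` and `|I_2 ∩ I'_{π(2)}| ≥ m`. -/
theorem stmt_18 (N m : ℕ) (hm : 0 < m)
    (I1 I2 I1' I2' : Finset (Fin N))
    (hId : Disjoint I1 I2) (hIu : I1 ∪ I2 = Finset.univ)
    (hI'd : Disjoint I1' I2') (hI'u : I1' ∪ I2' = Finset.univ)
    (h1 : 2 * m ≤ I1.card) (h2 : 2 * m ≤ I2.card)
    (hN : (4 * m : ℤ) + |(I1'.card : ℤ) - (I2'.card : ℤ)| ≤ (N : ℤ)) :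
    (m ≤ (I1 ∩ I1').card ∧ m ≤ (I2 ∩ I2').card) ∨
    (m ≤ (I1 ∩ I2').card ∧ m ≤ (I2 ∩ I1').card) := by
  have key1 : (I1 ∩ I1').card + (I1 ∩ I2').card = I1.card := by
    rw [← card_union_of_disjoint (hI'd.mono inter_subset_right inter_subset_right),
      ← inter_union_distrib_left, hI'u, inter_univ]
  have key2 : (I2 ∩ I1').card + (I2 ∩ I2').card = I2.card := by
    rw [← card_union_of_disjoint (hI'd.mono inter_subset_right inter_subset_right),
      ← inter_union_distrib_left, hI'u, inter_univ]
  have key3 : (I1 ∩ I1').card + (I2 ∩ I1').card = I1'.card := by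
    rw [← card_union_of_disjoint (hId.mono inter_subset_left inter_subset_left),
      ← union_inter_distrib_right, hIu, univ_inter]
  have key4 : (I1 ∩ I2').card + (I2 ∩ I2').card = I2'.card := by
    rw [← card_union_of_disjoint (hId.mono inter_subset_left inter_subset_left),
      ← union_inter_distrib_right, hIu, univ_inter]
  have keyN : I1.card + I2.card = N := by
    rw [← card_union_of_disjoint hId, hIu, card_univ, Fintype.card_fin]
  rcases abs_cases ((I1'.card : ℤ) - (I2'.card : ℤ)) with ⟨he, _⟩ | ⟨he, _⟩ <;>
    rw [he] at hN <;> omega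
end
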